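/- Let a, b, c be integers, and let G be the group presented with generators x, y, z, h and relators x h x⁻¹ h⁻¹, y h y⁻¹ h⁻¹, z h z⁻¹ h⁻¹, x^a h, y^b h, z^c h, x y z. Then the quotient of G by the normal closure of the image of the generator h is isomorphic to the triangle group Δ(|a|,|b|,|c|), presented with generators x, y, z and relators x^{|a|}, y^{|b|}, z^{|c|}, x y z. -/
import Mathlib


/-- Relators of the fundamental-group presentation of a Seifert fibered space over `S²`
with three exceptional fibers of indices `a, b, c`: generators `x = of 0`, `y = of 1`,
`z = of 2`, `h = of 3`, relators `xhx⁻¹h⁻¹, yhy⁻¹h⁻¹, zhz⁻¹h⁻¹, x^a h, y^b h, z^c h, xyz`. -/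
def seifertRels (a b c : ℤ) : Set (FreeGroup (Fin 4)) :=
  { FreeGroup.of 0 * FreeGroup.of 3 * (FreeGroup.of 0)⁻¹ * (FreeGroup.of 3)⁻¹,
    FreeGroup.of 1 * FreeGroup.of 3 * (FreeGroup.of 1)⁻¹ * (FreeGroup.of 3)⁻¹,
    FreeGroup.of 2 * FreeGroup.of 3 * (FreeGroup.of 2)⁻¹ * (FreeGroup.of 3)⁻¹,
    FreeGroup.of 0 ^ a * FreeGroup.of 3,
    FreeGroup.of 1 ^ b * FreeGroup.of 3,
    FreeGroup.of 2 ^ c * FreeGroup.of 3,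
    FreeGroup.of 0 * FreeGroup.of 1 * FreeGroup.of 2 }

/-- Relators of the triangle group Δ(p,q,r): generators `x = of 0`, `y = of 1`, `z = of 2`,
relators `x^p, y^q, z^r, xyz`. -/
def triangleRels (p q r : ℕ) : Set (FreeGroup (Fin 3)) :=
  { FreeGroup.of 0 ^ p, FreeGroup.of 1 ^ q, FreeGroup.of 2 ^ r,
    FreeGroup.of 0 * FreeGroup.of 1 * FreeGroup.of 2 }

section aux
variable (a b c : ℤ)

local notation "T" => PresentedGroup (triangleRels a.natAbs b.natAbs c.natAbs)
local notation "S" => PresentedGroup (seifertRels a b c)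

-- relator images are 1
lemma rel_one {α : Type*} {rels : Set (FreeGroup α)} {r : FreeGroup α} (h : r ∈ rels) :
    PresentedGroup.mk rels r = 1 := by
  exact (QuotientGroup.eq_one_iff _).mpr (Subgroup.subset_normalClosure h)

lemma zpow_natAbs_eq_one {G : Type*} [Group G] {x : G} {n : ℤ}
    (h : x ^ n.natAbs = 1) : x ^ n = 1 := by
  rcases Int.natAbs_eq n with h' | h' <;> rw [h']
  · rw [zpow_natCast, h]
  · rw [zpow_neg, zpow_natCast, h, inv_one]

lemma natAbs_pow_eq_one {G : Type*} [Group G] {x : G} {n : ℤ}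
    (h : x ^ n = 1) : x ^ n.natAbs = 1 := by
  have := zpow_natAbs_eq_one (n := n) (x := x)
  rcases Int.natAbs_eq n with h' | h'
  · rw [← zpow_natCast, ← h', h]
  · have : (n.natAbs : ℤ) = -n := by omega
    rw [← zpow_natCast, this, zpow_neg, h, inv_one]

def fmap : Fin 4 → T := ![PresentedGroup.of 0, PresentedGroup.of 1, PresentedGroup.of 2, 1]

lemma fmap_rels : ∀ r ∈ seifertRels a b c, FreeGroup.lift (fmap a b c) r = 1 := by
  have h0 : (PresentedGroup.of 0 : T) ^ a = 1 := by
    apply zpow_natAbs_eq_one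
    have := rel_one (rels := triangleRels a.natAbs b.natAbs c.natAbs)
      (r := FreeGroup.of 0 ^ a.natAbs) (Or.inl rfl)
    rwa [map_pow] at this
  have h1 : (PresentedGroup.of 1 : T) ^ b = 1 := by
    apply zpow_natAbs_eq_one
    have := rel_one (rels := triangleRels a.natAbs b.natAbs c.natAbs)
      (r := FreeGroup.of 1 ^ b.natAbs) (Or.inr (Or.inl rfl))
    rwa [map_pow] at this
  have h2 : (PresentedGroup.of 2 : T) ^ c = 1 := by
    apply zpow_natAbs_eq_one
    have := rel_one (rels := triangleRels a.natAbs b.natAbs c.natAbs)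
      (r := FreeGroup.of 2 ^ c.natAbs) (Or.inr (Or.inr (Or.inl rfl)))
    rwa [map_pow] at this
  have h3 : (PresentedGroup.of 0 : T) * PresentedGroup.of 1 * PresentedGroup.of 2 = 1 := by
    have := rel_one (rels := triangleRels a.natAbs b.natAbs c.natAbs)
      (r := FreeGroup.of 0 * FreeGroup.of 1 * FreeGroup.of 2) (Or.inr (Or.inr (Or.inr rfl)))
    rwa [map_mul, map_mul] at this
  intro r hr
  simp only [seifertRels, Set.mem_insert_iff, Set.mem_singleton_iff] at hr
  rcases hr with rfl|rfl|rfl|rfl|rfl|rfl|rfl <;>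
    simp [fmap, map_zpow, h0, h1, h2, h3]

local notation "N" => Subgroup.normalClosure ({PresentedGroup.of 3} : Set (PresentedGroup (seifertRels a b c)))
local notation "Q" => PresentedGroup (seifertRels a b c) ⧸ Subgroup.normalClosure ({PresentedGroup.of 3} : Set (PresentedGroup (seifertRels a b c)))

def phi : S →* T := PresentedGroup.toGroup (fmap_rels a b c)

lemma phi_ker : N ≤ (phi a b c).ker := by
  apply Subgroup.normalClosure_le_normal
  intro x hx
  rw [Set.mem_singleton_iff] at hx
  subst hx
  show phi a b c (PresentedGroup.of 3) = 1
  rw [phi, PresentedGroup.toGroup.of]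
  rfl

def phibar : Q →* T := QuotientGroup.lift _ (phi a b c) (phi_ker a b c)

def gmap : Fin 3 → Q :=
  ![QuotientGroup.mk' _ (PresentedGroup.of 0), QuotientGroup.mk' _ (PresentedGroup.of 1),
    QuotientGroup.mk' _ (PresentedGroup.of 2)]

lemma h3_one : (QuotientGroup.mk' N) (PresentedGroup.of 3) = 1 := by
  rw [QuotientGroup.mk'_apply, QuotientGroup.eq_one_iff]
  exact Subgroup.subset_normalClosure rfl

lemma pow_rel (i : Fin 4) (n : ℤ)
    (h : FreeGroup.of i ^ n * FreeGroup.of 3 ∈ seifertRels a b c) :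
    ((QuotientGroup.mk' N) (PresentedGroup.of i)) ^ n.natAbs = 1 := by
  apply natAbs_pow_eq_one
  have h1 : (PresentedGroup.of i : S) ^ n * PresentedGroup.of 3 = 1 := by
    have := rel_one (rels := seifertRels a b c) h
    rwa [map_mul, map_zpow] at this
  have h2 : (PresentedGroup.of i : S) ^ n = (PresentedGroup.of 3 : S)⁻¹ :=
    mul_eq_one_iff_eq_inv.mp h1
  rw [← map_zpow, h2, map_inv, h3_one, inv_one]

lemma gmap_rels : ∀ r ∈ triangleRels a.natAbs b.natAbs c.natAbs,
    FreeGroup.lift (gmap a b c) r = 1 := by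
  intro r hr
  have h0 := pow_rel a b c 0 a (by right; right; right; left; rfl)
  have h1 := pow_rel a b c 1 b (by right; right; right; right; left; rfl)
  have h2 := pow_rel a b c 2 c (by right; right; right; right; right; left; rfl)
  have h3 : (QuotientGroup.mk' N) (PresentedGroup.of 0) * (QuotientGroup.mk' N) (PresentedGroup.of 1)
      * (QuotientGroup.mk' N) (PresentedGroup.of 2) = 1 := by
    have h4 : (PresentedGroup.of 0 : S) * PresentedGroup.of 1 * PresentedGroup.of 2 = 1 := by
      have := rel_one (rels := seifertRels a b c)
        (r := FreeGroup.of 0 * FreeGroup.of 1 * FreeGroup.of 2)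
        (by right; right; right; right; right; right; rfl)
      rwa [map_mul, map_mul] at this
    rw [← map_mul, ← map_mul, h4, map_one]
  simp only [QuotientGroup.mk'_apply] at h0 h1 h2 h3
  simp only [triangleRels, Set.mem_insert_iff, Set.mem_singleton_iff] at hr
  rcases hr with rfl|rfl|rfl|rfl <;>
    simp [gmap, QuotientGroup.mk'_apply, h0, h1, h2, h3]

def psi : T →* Q := PresentedGroup.toGroup (gmap_rels a b c)

theorem main : Nonempty (Q ≃* T) := by
  refine ⟨MonoidHom.toMulEquiv (phibar a b c) (psi a b c) ?_ ?_⟩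
  · apply QuotientGroup.monoidHom_ext
    apply PresentedGroup.ext
    intro i
    show psi a b c (phi a b c (PresentedGroup.of i)) = (QuotientGroup.mk' N) (PresentedGroup.of i)
    rw [phi, PresentedGroup.toGroup.of]
    fin_cases i
    · exact PresentedGroup.toGroup.of _
    · exact PresentedGroup.toGroup.of _
    · exact PresentedGroup.toGroup.of _
    · show psi a b c 1 = _
      rw [map_one]
      exact (h3_one a b c).symm
  · apply PresentedGroup.ext
    intro i
    show phibar a b c (psi a b c (PresentedGroup.of i)) = PresentedGroup.of i
    rw [psi, PresentedGroup.toGroup.of]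
    fin_cases i <;>
    · show phi a b c (PresentedGroup.of _) = _
      exact PresentedGroup.toGroup.of _

end aux

theorem seifert_mod_fiber_iso_triangle (a b c : ℤ) :
    Nonempty ((PresentedGroup (seifertRels a b c) ⧸
        Subgroup.normalClosure ({PresentedGroup.of 3} :
          Set (PresentedGroup (seifertRels a b c)))) ≃*
      PresentedGroup (triangleRels a.natAbs b.natAbs c.natAbs)) := main a b c
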